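/- Let n ≥ 1 and let M ∈ Matₙ(R) be a matrix whose characteristic polynomial is Eisenstein. Let M̄ ∈ Matₙ(k) be the reduction of M modulo 𝔪. Then the centralizer of M̄ in GLₙ(k), i.e. {g ∈ GLₙ(k) : g·M̄ = M̄·g}, is a commutative group. (In the terminology of the paper: M is regular.) -/

import Mathlib

open IsLocalRing

/-- A monic polynomial `x^n + a_{n-1}x^{n-1} + ⋯ + a_0 ∈ R[x]` is Eisenstein if all
lower coefficients lie in `𝔪` and the constant coefficient is not in `𝔪²`. -/
def IsEisensteinPoly (R : Type*) [CommRing R] [IsLocalRing R] (f : Polynomial R) : Prop :=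
  f.Monic ∧ (∀ i < f.natDegree, f.coeff i ∈ maximalIdeal R) ∧
    f.coeff 0 ∉ (maximalIdeal R) ^ 2

section Aux

variable {k V : Type*} [Field k] [AddCommGroup V] [Module k V]

lemma pow_apply_linearIndependent {n : ℕ} (f : Module.End k V) (h1 : f ^ n = 0)
    {v : V} (hv : (f ^ (n - 1)) v ≠ 0) :
    LinearIndependent k (fun i : Fin n => (f ^ (i : ℕ)) v) := by
  have hpow : ∀ t : ℕ, n ≤ t → f ^ t = 0 := by
    intro t ht
    rw [← Nat.sub_add_cancel ht, pow_add, h1, mul_zero]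
  rw [Fintype.linearIndependent_iff]
  intro c hc
  suffices H : ∀ m : ℕ, ∀ j : Fin n, (j : ℕ) = m → c j = 0 by
    intro i; exact H i i rfl
  intro m
  induction m using Nat.strong_induction_on with
  | _ m ih =>
    intro j hj
    have hmn : m ≤ n - 1 := by
      have := j.2; omega
    have key := congrArg (fun x => (f ^ (n - 1 - m)) x) hc
    simp only [map_sum, map_smul, map_zero] at key
    have hterm : ∀ i : Fin n, i ≠ j →
        c i • (f ^ (n - 1 - m)) ((f ^ (i : ℕ)) v) = 0 := by
      intro i hi
      rcases lt_or_gt_of_ne (fun h : (i : ℕ) = (j : ℕ) => hi (Fin.ext h)) with hlt | hgt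
      · rw [ih i (hj ▸ hlt) i rfl, zero_smul]
      · have : (f ^ (n - 1 - m)) ((f ^ (i : ℕ)) v) = (f ^ (n - 1 - m + i)) v := by
          rw [pow_add]; rfl
        rw [this, hpow (n - 1 - m + i) (by have := j.2; omega), LinearMap.zero_apply,
          smul_zero]
    rw [Finset.sum_eq_single j (fun i _ hi => hterm i hi) (by simp)] at key
    have hfj : (f ^ (n - 1 - m)) ((f ^ (j : ℕ)) v) = (f ^ (n - 1)) v := by
      rw [← Module.End.mul_apply, ← pow_add]
      rw [hj, Nat.sub_add_cancel hmn]
    rw [hfj] at key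
    rcases smul_eq_zero.mp key with h | h
    · exact h
    · exact absurd h hv

lemma commute_of_nilpotent_cyclic [FiniteDimensional k V] {n : ℕ} (hn : 1 ≤ n)
    (hdim : Module.finrank k V = n)
    (f : Module.End k V) (h1 : f ^ n = 0) (h2 : f ^ (n - 1) ≠ 0)
    (g h : Module.End k V) (hg : Commute g f) (hh : Commute h f) :
    Commute g h := by
  -- find a cyclic vector
  obtain ⟨v, hv⟩ : ∃ v : V, (f ^ (n - 1)) v ≠ 0 := by
    by_contra hcon
    push_neg at hcon
    exact h2 (LinearMap.ext fun x => hcon x)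
  have li := pow_apply_linearIndependent f h1 hv
  haveI : Nonempty (Fin n) := ⟨⟨0, hn⟩⟩
  let b : Module.Basis (Fin n) k V :=
    basisOfLinearIndependentOfCardEqFinrank li (by simp [hdim])
  have hb : ∀ i : Fin n, b i = (f ^ (i : ℕ)) v := fun i => by
    rw [coe_basisOfLinearIndependentOfCardEqFinrank]
  -- any endomorphism commuting with f is a linear combination of powers of f
  have main : ∀ g : Module.End k V, Commute g f →
      ∃ c : Fin n → k, g = ∑ i : Fin n, c i • f ^ (i : ℕ) := by
    intro g hg
    have hrepr : g v = ∑ j : Fin n, b.repr (g v) j • (f ^ (j : ℕ)) v := by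
      conv_lhs => rw [← b.sum_repr (g v)]
      exact Finset.sum_congr rfl fun j _ => by rw [hb j]
    obtain ⟨c, hcv⟩ : ∃ c : Fin n → k, g v = ∑ j : Fin n, c j • (f ^ (j : ℕ)) v :=
      ⟨_, hrepr⟩
    refine ⟨c, ?_⟩
    apply b.ext
    intro i
    rw [hb i]
    have hcomm : g * f ^ (i : ℕ) = f ^ (i : ℕ) * g := (hg.pow_right (i : ℕ)).eq
    have hgi : g ((f ^ (i : ℕ)) v) = (f ^ (i : ℕ)) (g v) := by
      rw [← Module.End.mul_apply, hcomm, Module.End.mul_apply]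
    rw [hgi, hcv, map_sum]
    rw [LinearMap.sum_apply]
    refine Finset.sum_congr rfl fun j _ => ?_
    rw [map_smul, LinearMap.smul_apply, ← Module.End.mul_apply, ← Module.End.mul_apply,
      ← pow_add, ← pow_add, Nat.add_comm]
  obtain ⟨c, hc⟩ := main g hg
  obtain ⟨d, hd⟩ := main h hh
  rw [hc, hd]
  refine Commute.sum_left _ _ _ fun i _ => Commute.sum_right _ _ _ fun j _ => ?_
  exact ((Commute.refl f).pow_pow _ _).smul_left _ |>.smul_right _

end Aux

/-- determinant of a matrix with entries in an ideal lies in `I ^ card`. -/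
lemma det_mem_pow_of_entries_mem {R : Type*} [CommRing R] {n : ℕ}
    (I : Ideal R) (A : Matrix (Fin n) (Fin n) R) (hA : ∀ i j, A i j ∈ I) :
    A.det ∈ I ^ n := by
  rw [Matrix.det_apply']
  refine Ideal.sum_mem _ fun σ _ => ?_
  refine Ideal.mul_mem_left _ _ ?_
  have := Ideal.prod_mem_prod (s := (Finset.univ : Finset (Fin n)))
    (I := fun _ : Fin n => I) (x := fun i => A (σ i) i) (fun i _ => hA (σ i) i)
  simpa using this

/-- If `M ∈ Matₙ(R)` has Eisenstein characteristic polynomial then the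
centralizer in `GLₙ(k)` of the reduction `M̄` of `M` modulo `𝔪` is commutative, i.e. `M`
is regular. -/
theorem eisenstein_reduction_regular
    (R : Type*) [CommRing R] [IsDomain R] [IsDiscreteValuationRing R]
    (n : ℕ) (hn : 1 ≤ n) (M : Matrix (Fin n) (Fin n) R)
    (hM : IsEisensteinPoly R M.charpoly) :
    ∀ g h : GL (Fin n) (R ⧸ maximalIdeal R),
      (g : Matrix (Fin n) (Fin n) (R ⧸ maximalIdeal R)) *
          M.map (Ideal.Quotient.mk (maximalIdeal R)) =
        M.map (Ideal.Quotient.mk (maximalIdeal R)) *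
          (g : Matrix (Fin n) (Fin n) (R ⧸ maximalIdeal R)) →
      (h : Matrix (Fin n) (Fin n) (R ⧸ maximalIdeal R)) *
          M.map (Ideal.Quotient.mk (maximalIdeal R)) =
        M.map (Ideal.Quotient.mk (maximalIdeal R)) *
          (h : Matrix (Fin n) (Fin n) (R ⧸ maximalIdeal R)) →
      g * h = h * g := by
  intro g h hg hh
  letI : Field (R ⧸ maximalIdeal R) := Ideal.Quotient.field _
  set mk : R →+* R ⧸ maximalIdeal R := Ideal.Quotient.mk (maximalIdeal R) with hmk
  set B : Matrix (Fin n) (Fin n) (R ⧸ maximalIdeal R) := M.map mk with hBdef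
  obtain ⟨hmonic, hlow, h0⟩ := hM
  have hdeg : M.charpoly.natDegree = n := by
    simpa using M.charpoly_natDegree_eq_dim
  -- the characteristic polynomial of B is X^n
  have hcp : B.charpoly = Polynomial.X ^ n := by
    have hmap : B.charpoly = M.charpoly.map mk := M.charpoly_map mk
    ext i
    rw [hmap, Polynomial.coeff_map, Polynomial.coeff_X_pow]
    rcases lt_trichotomy i n with hi | hi | hi
    · rw [if_neg (Nat.ne_of_lt hi)]
      exact Ideal.Quotient.eq_zero_iff_mem.mpr (hlow i (by rw [hdeg]; exact hi))
    · rw [if_pos hi]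
      have : M.charpoly.coeff i = 1 := by
        rw [hi]
        have := hmonic.coeff_natDegree
        rwa [hdeg] at this
      rw [this, map_one]
    · rw [if_neg (Nat.ne_of_gt hi),
        Polynomial.coeff_eq_zero_of_natDegree_lt (by rw [hdeg]; exact hi), map_zero]
  have hBn : B ^ n = 0 := by
    have := B.aeval_self_charpoly
    rwa [hcp, map_pow, Polynomial.aeval_X] at this
  -- B ^ (n-1) ≠ 0
  have hBn1 : B ^ (n - 1) ≠ 0 := by
    intro hzero
    rcases eq_or_lt_of_le hn with h1 | h2
    · -- n = 1
      have h1' : n - 1 = 0 := by omega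
      rw [h1', pow_zero] at hzero
      have hent : (1 : Matrix (Fin n) (Fin n) (R ⧸ maximalIdeal R)) ⟨0, hn⟩ ⟨0, hn⟩ = 0 := by
        rw [hzero]; rfl
      rw [Matrix.one_apply_eq] at hent
      exact one_ne_zero hent
    · -- n ≥ 2
      have hmp : (M ^ (n - 1)).map mk = B ^ (n - 1) := by
        have := map_pow (RingHom.mapMatrix mk (m := Fin n)) M (n - 1)
        simpa [RingHom.mapMatrix_apply] using this
      have hentries : ∀ i j, (M ^ (n - 1)) i j ∈ maximalIdeal R := by
        intro i j
        have : ((M ^ (n - 1)).map mk) i j = 0 := by rw [hmp, hzero]; rfl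
        exact Ideal.Quotient.eq_zero_iff_mem.mp this
      have hdet : (M ^ (n - 1)).det ∈ (maximalIdeal R) ^ n :=
        det_mem_pow_of_entries_mem _ _ hentries
      rw [Matrix.det_pow] at hdet
      -- relation between det and coeff 0
      have hsign : M.det = (-1 : R) ^ n * M.charpoly.coeff 0 := by
        simpa using M.det_eq_sign_charpoly_coeff
      have ha0 : M.charpoly.coeff 0 = (-1 : R) ^ n * M.det := by
        rw [hsign, ← mul_assoc, ← pow_add, ← two_mul, pow_mul, neg_one_sq, one_pow, one_mul]
      have hdm : M.det ∈ maximalIdeal R := by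
        rw [hsign]
        exact Ideal.mul_mem_left _ _ (hlow 0 (by rw [hdeg]; omega))
      have hdm2 : M.det ∉ (maximalIdeal R) ^ 2 := by
        intro hmem
        exact h0 (ha0 ▸ Ideal.mul_mem_left _ _ hmem)
      -- DVR argument
      obtain ⟨ϖ, hϖ⟩ := IsDiscreteValuationRing.exists_irreducible R
      have hmax : maximalIdeal R = Ideal.span {ϖ} :=
        (IsDiscreteValuationRing.irreducible_iff_uniformizer ϖ).mp hϖ
      rw [hmax, Ideal.span_singleton_pow, Ideal.mem_span_singleton] at hdet hdm2
      rw [hmax, Ideal.mem_span_singleton] at hdm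
      obtain ⟨u, hu⟩ := hdm
      have hϖu : ¬ ϖ ∣ u := by
        intro ⟨c, hc⟩
        exact hdm2 ⟨c, by rw [hu, hc, sq]; ring⟩
      have hprime : Prime ϖ := hϖ.prime
      obtain ⟨c, hc⟩ := hdet
      have hcancel : u ^ (n - 1) = ϖ * c := by
        have hne : ϖ ^ (n - 1) ≠ 0 := pow_ne_zero _ hprime.ne_zero
        apply mul_left_cancel₀ hne
        have hn1 : n = (n - 1) + 1 := by omega
        calc ϖ ^ (n - 1) * u ^ (n - 1) = (ϖ * u) ^ (n - 1) := (mul_pow _ _ _).symm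
          _ = M.det ^ (n - 1) := by rw [hu]
          _ = ϖ ^ n * c := hc
          _ = ϖ ^ (n - 1) * (ϖ * c) := by
              conv_lhs => rw [hn1]
              rw [pow_succ]; ring
      exact hϖu (hprime.dvd_of_dvd_pow ⟨c, hcancel⟩)
  -- transfer to endomorphisms and conclude
  let φ := Matrix.toLinAlgEquiv' (R := R ⧸ maximalIdeal R) (n := Fin n)
  have hfin : Module.finrank (R ⧸ maximalIdeal R) (Fin n → R ⧸ maximalIdeal R) = n :=
    Module.finrank_fin_fun _
  have hc := commute_of_nilpotent_cyclic hn hfin (φ B)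
    (by rw [← map_pow, hBn, map_zero])
    (fun hz => hBn1 (φ.injective (by rw [map_pow, hz, map_zero])))
    (φ (g : Matrix (Fin n) (Fin n) (R ⧸ maximalIdeal R)))
    (φ (h : Matrix (Fin n) (Fin n) (R ⧸ maximalIdeal R)))
    (by unfold Commute SemiconjBy; rw [← map_mul, ← map_mul, hg])
    (by unfold Commute SemiconjBy; rw [← map_mul, ← map_mul, hh])
  have hmat : (g : Matrix (Fin n) (Fin n) (R ⧸ maximalIdeal R)) *
      (h : Matrix (Fin n) (Fin n) (R ⧸ maximalIdeal R)) =
      (h : Matrix (Fin n) (Fin n) (R ⧸ maximalIdeal R)) *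
      (g : Matrix (Fin n) (Fin n) (R ⧸ maximalIdeal R)) :=
    φ.injective (by rw [map_mul, map_mul]; exact hc)
  exact Units.ext hmat
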